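/- In the universal enveloping algebra U(sl_2)^{⊗N}, with e_i, f_i, h_i denoting the Chevalley generators acting in the i-th tensor factor and a_1,...,a_N distinct complex numbers, the Gaudin hamiltonians Ĥ_i = ∑_{j≠i} (e_i f_j + f_i e_j + (1/2) h_i h_j)/(a_i − a_j) pairwise commute: [Ĥ_i, Ĥ_j] = 0 for all i, j. -/
import Mathlib


set_option linter.unusedSectionVars false
set_option maxHeartbeats 1000000

section aux
variable {A : Type} [Ring A] [Algebra ℂ A]

private lemma L1 (x y u v : A) (hyu : y * u = u * y) (hyv : y * v = v * y)
    (hxv : x * v = v * x) :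
    x * y * (u * v) - u * v * (x * y) = (x * u - u * x) * (y * v) := by
  have h1 : x * y * (u * v) = x * u * (y * v) := Commute.mul_mul_mul_comm hyu x v
  have h2 : u * v * (x * y) = u * x * (v * y) := Commute.mul_mul_mul_comm hxv.symm u y
  rw [h1, h2, ← hyv, sub_mul]

private lemma L2 (x y u v : A) (hxu : x * u = u * x) (hxv : x * v = v * x)
    (hyv : y * v = v * y) :
    x * y * (u * v) - u * v * (x * y) = x * (y * u - u * y) * v := by
  have h1 : x * y * (u * v) = x * (y * u) * v := by
    rw [mul_assoc, mul_assoc, ← mul_assoc y u v]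
  have h2 : u * v * (x * y) = x * (u * y) * v := by
    rw [Commute.mul_mul_mul_comm hxv.symm u y, ← hxu, ← hyv,
      mul_assoc x u (y * v), ← mul_assoc u y v, ← mul_assoc x (u * y) v]
  rw [h1, h2, ← sub_mul, ← mul_sub]

private lemma e9 (a b c x y z : A) :
    (a + b + c) * (x + y + z) - (x + y + z) * (a + b + c) =
      ((a * x - x * a) + (a * y - y * a) + (a * z - z * a)) +
      ((b * x - x * b) + (b * y - y * b) + (b * z - z * b)) +
      ((c * x - x * c) + (c * y - y * c) + (c * z - z * c)) := by
  noncomm_ring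

private lemma key_comm (e1 f1 h1 e2 f2 h2 e3 f3 h3 : A)
    (r1 : h1 * e1 - e1 * h1 = (2 : ℂ) • e1)
    (r2 : h1 * f1 - f1 * h1 = (-2 : ℂ) • f1)
    (r3 : e1 * f1 - f1 * e1 = h1)
    (r4 : h2 * e2 - e2 * h2 = (2 : ℂ) • e2)
    (r5 : h2 * f2 - f2 * h2 = (-2 : ℂ) • f2)
    (r6 : e2 * f2 - f2 * e2 = h2)
    (c12 : ∀ u ∈ ({e1, f1, h1} : Set A), ∀ v ∈ ({e2, f2, h2} : Set A), u * v = v * u)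
    (c13 : ∀ u ∈ ({e1, f1, h1} : Set A), ∀ v ∈ ({e3, f3, h3} : Set A), u * v = v * u)
    (c23 : ∀ u ∈ ({e2, f2, h2} : Set A), ∀ v ∈ ({e3, f3, h3} : Set A), u * v = v * u) :
    ((e1 * f2 + f1 * e2 + (2⁻¹ : ℂ) • (h1 * h2)) * (e1 * f3 + f1 * e3 + (2⁻¹ : ℂ) • (h1 * h3))
      - (e1 * f3 + f1 * e3 + (2⁻¹ : ℂ) • (h1 * h3)) * (e1 * f2 + f1 * e2 + (2⁻¹ : ℂ) • (h1 * h2)))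
    + ((e1 * f2 + f1 * e2 + (2⁻¹ : ℂ) • (h1 * h2)) * (e2 * f3 + f2 * e3 + (2⁻¹ : ℂ) • (h2 * h3))
      - (e2 * f3 + f2 * e3 + (2⁻¹ : ℂ) • (h2 * h3)) * (e1 * f2 + f1 * e2 + (2⁻¹ : ℂ) • (h1 * h2)))
    = 0 := by
  have EE12 : e1 * e2 = e2 * e1 := c12 _ (by simp) _ (by simp)
  have EF12 : e1 * f2 = f2 * e1 := c12 _ (by simp) _ (by simp)
  have EH12 : e1 * h2 = h2 * e1 := c12 _ (by simp) _ (by simp)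
  have FE12 : f1 * e2 = e2 * f1 := c12 _ (by simp) _ (by simp)
  have FF12 : f1 * f2 = f2 * f1 := c12 _ (by simp) _ (by simp)
  have FH12 : f1 * h2 = h2 * f1 := c12 _ (by simp) _ (by simp)
  have HE12 : h1 * e2 = e2 * h1 := c12 _ (by simp) _ (by simp)
  have HF12 : h1 * f2 = f2 * h1 := c12 _ (by simp) _ (by simp)
  have HH12 : h1 * h2 = h2 * h1 := c12 _ (by simp) _ (by simp)
  have EE13 : e1 * e3 = e3 * e1 := c13 _ (by simp) _ (by simp)
  have EF13 : e1 * f3 = f3 * e1 := c13 _ (by simp) _ (by simp)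
  have EH13 : e1 * h3 = h3 * e1 := c13 _ (by simp) _ (by simp)
  have FE13 : f1 * e3 = e3 * f1 := c13 _ (by simp) _ (by simp)
  have FF13 : f1 * f3 = f3 * f1 := c13 _ (by simp) _ (by simp)
  have FH13 : f1 * h3 = h3 * f1 := c13 _ (by simp) _ (by simp)
  have HE13 : h1 * e3 = e3 * h1 := c13 _ (by simp) _ (by simp)
  have HF13 : h1 * f3 = f3 * h1 := c13 _ (by simp) _ (by simp)
  have HH13 : h1 * h3 = h3 * h1 := c13 _ (by simp) _ (by simp)
  have EE23 : e2 * e3 = e3 * e2 := c23 _ (by simp) _ (by simp)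
  have EF23 : e2 * f3 = f3 * e2 := c23 _ (by simp) _ (by simp)
  have EH23 : e2 * h3 = h3 * e2 := c23 _ (by simp) _ (by simp)
  have FE23 : f2 * e3 = e3 * f2 := c23 _ (by simp) _ (by simp)
  have FF23 : f2 * f3 = f3 * f2 := c23 _ (by simp) _ (by simp)
  have FH23 : f2 * h3 = h3 * f2 := c23 _ (by simp) _ (by simp)
  have HE23 : h2 * e3 = e3 * h2 := c23 _ (by simp) _ (by simp)
  have HF23 : h2 * f3 = f3 * h2 := c23 _ (by simp) _ (by simp)
  have HH23 : h2 * h3 = h3 * h2 := c23 _ (by simp) _ (by simp)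
  have r1' : e1 * h1 - h1 * e1 = (-2 : ℂ) • e1 := by
    rw [← neg_sub (h1 * e1) (e1 * h1), r1, neg_smul]
  have r2' : f1 * h1 - h1 * f1 = (2 : ℂ) • f1 := by
    rw [← neg_sub (h1 * f1) (f1 * h1), r2, neg_smul, neg_neg]
  have r3' : f1 * e1 - e1 * f1 = -h1 := by
    rw [← neg_sub (e1 * f1) (f1 * e1), r3]
  have r4' : e2 * h2 - h2 * e2 = (-2 : ℂ) • e2 := by
    rw [← neg_sub (h2 * e2) (e2 * h2), r4, neg_smul]
  have r5' : f2 * h2 - h2 * f2 = (2 : ℂ) • f2 := by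
    rw [← neg_sub (h2 * f2) (f2 * h2), r5, neg_smul, neg_neg]
  have r6' : f2 * e2 - e2 * f2 = -h2 := by
    rw [← neg_sub (e2 * f2) (f2 * e2), r6]
  have T1 : (e1 * f2) * (e1 * f3) - (e1 * f3) * (e1 * f2) = 0 := by
    rw [L1 e1 f2 e1 f3 EF12.symm FF23 EF13, sub_self, zero_mul]
  have T2 : (e1 * f2) * (f1 * e3) - (f1 * e3) * (e1 * f2) = h1 * (f2 * e3) := by
    rw [L1 e1 f2 f1 e3 FF12.symm FE23 EE13, r3]
  have T3 : (e1 * f2) * ((2⁻¹ : ℂ) • (h1 * h3)) - ((2⁻¹ : ℂ) • (h1 * h3)) * (e1 * f2)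
      = -(e1 * (f2 * h3)) := by
    rw [mul_smul_comm, smul_mul_assoc, ← smul_sub, L1 e1 f2 h1 h3 HF12.symm FH23 EH13, r1',
      smul_mul_assoc, smul_smul]
    module
  have T4 : (f1 * e2) * (e1 * f3) - (e1 * f3) * (f1 * e2) = -(h1 * (e2 * f3)) := by
    rw [L1 f1 e2 e1 f3 EE12.symm EF23 FF13, r3', neg_mul]
  have T5 : (f1 * e2) * (f1 * e3) - (f1 * e3) * (f1 * e2) = 0 := by
    rw [L1 f1 e2 f1 e3 FE12.symm EE23 FE13, sub_self, zero_mul]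
  have T6 : (f1 * e2) * ((2⁻¹ : ℂ) • (h1 * h3)) - ((2⁻¹ : ℂ) • (h1 * h3)) * (f1 * e2)
      = f1 * (e2 * h3) := by
    rw [mul_smul_comm, smul_mul_assoc, ← smul_sub, L1 f1 e2 h1 h3 HE12.symm EH23 FH13, r2',
      smul_mul_assoc, smul_smul]
    module
  have T7 : ((2⁻¹ : ℂ) • (h1 * h2)) * (e1 * f3) - (e1 * f3) * ((2⁻¹ : ℂ) • (h1 * h2))
      = e1 * (h2 * f3) := by
    rw [smul_mul_assoc, mul_smul_comm, ← smul_sub, L1 h1 h2 e1 f3 EH12.symm HF23 HF13, r1,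
      smul_mul_assoc, smul_smul]
    module
  have T8 : ((2⁻¹ : ℂ) • (h1 * h2)) * (f1 * e3) - (f1 * e3) * ((2⁻¹ : ℂ) • (h1 * h2))
      = -(f1 * (h2 * e3)) := by
    rw [smul_mul_assoc, mul_smul_comm, ← smul_sub, L1 h1 h2 f1 e3 FH12.symm HE23 HE13, r2,
      smul_mul_assoc, smul_smul]
    module
  have T9 : ((2⁻¹ : ℂ) • (h1 * h2)) * ((2⁻¹ : ℂ) • (h1 * h3))
      - ((2⁻¹ : ℂ) • (h1 * h3)) * ((2⁻¹ : ℂ) • (h1 * h2)) = 0 := by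
    rw [smul_mul_assoc, smul_mul_assoc, mul_smul_comm, mul_smul_comm, smul_smul, smul_smul,
      ← smul_sub, L1 h1 h2 h1 h3 HH12.symm HH23 HH13, sub_self, zero_mul, smul_zero]
  have S1 : (e1 * f2) * (e2 * f3) - (e2 * f3) * (e1 * f2) = -(e1 * h2 * f3) := by
    rw [L2 e1 f2 e2 f3 EE12 EF13 FF23, r6', mul_neg, neg_mul]
  have S2 : (e1 * f2) * (f2 * e3) - (f2 * e3) * (e1 * f2) = 0 := by
    rw [L2 e1 f2 f2 e3 EF12 EE13 FE23, sub_self, mul_zero, zero_mul]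
  have S3 : (e1 * f2) * ((2⁻¹ : ℂ) • (h2 * h3)) - ((2⁻¹ : ℂ) • (h2 * h3)) * (e1 * f2)
      = e1 * f2 * h3 := by
    rw [mul_smul_comm, smul_mul_assoc, ← smul_sub, L2 e1 f2 h2 h3 EH12 EH13 FH23, r5',
      mul_smul_comm, smul_mul_assoc, smul_smul]
    module
  have S4 : (f1 * e2) * (e2 * f3) - (e2 * f3) * (f1 * e2) = 0 := by
    rw [L2 f1 e2 e2 f3 FE12 FF13 EF23, sub_self, mul_zero, zero_mul]
  have S5 : (f1 * e2) * (f2 * e3) - (f2 * e3) * (f1 * e2) = f1 * h2 * e3 := by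
    rw [L2 f1 e2 f2 e3 FF12 FE13 EE23, r6]
  have S6 : (f1 * e2) * ((2⁻¹ : ℂ) • (h2 * h3)) - ((2⁻¹ : ℂ) • (h2 * h3)) * (f1 * e2)
      = -(f1 * e2 * h3) := by
    rw [mul_smul_comm, smul_mul_assoc, ← smul_sub, L2 f1 e2 h2 h3 FH12 FH13 EH23, r4',
      mul_smul_comm, smul_mul_assoc, smul_smul]
    module
  have S7 : ((2⁻¹ : ℂ) • (h1 * h2)) * (e2 * f3) - (e2 * f3) * ((2⁻¹ : ℂ) • (h1 * h2))
      = h1 * e2 * f3 := by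
    rw [smul_mul_assoc, mul_smul_comm, ← smul_sub, L2 h1 h2 e2 f3 HE12 HF13 HF23, r4,
      mul_smul_comm, smul_mul_assoc, smul_smul]
    module
  have S8 : ((2⁻¹ : ℂ) • (h1 * h2)) * (f2 * e3) - (f2 * e3) * ((2⁻¹ : ℂ) • (h1 * h2))
      = -(h1 * f2 * e3) := by
    rw [smul_mul_assoc, mul_smul_comm, ← smul_sub, L2 h1 h2 f2 e3 HF12 HE13 HE23, r5,
      mul_smul_comm, smul_mul_assoc, smul_smul]
    module
  have S9 : ((2⁻¹ : ℂ) • (h1 * h2)) * ((2⁻¹ : ℂ) • (h2 * h3))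
      - ((2⁻¹ : ℂ) • (h2 * h3)) * ((2⁻¹ : ℂ) • (h1 * h2)) = 0 := by
    rw [smul_mul_assoc, smul_mul_assoc, mul_smul_comm, mul_smul_comm, smul_smul, smul_smul,
      ← smul_sub, L2 h1 h2 h2 h3 HH12 HH13 HH23, sub_self, mul_zero, zero_mul, smul_zero]
  rw [e9, e9, T1, T2, T3, T4, T5, T6, T7, T8, T9, S1, S2, S3, S4, S5, S6, S7, S8, S9]
  noncomm_ring

end aux

open Finset

private noncomputable def Th {N : ℕ} {A : Type} [Ring A] [Algebra ℂ A] (e f h : Fin N → A)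
    (p q : Fin N) : A :=
  e p * f q + f p * e q + (2⁻¹ : ℂ) • (h p * h q)

private lemma Th_def {N : ℕ} {A : Type} [Ring A] [Algebra ℂ A] (e f h : Fin N → A)
    (p q : Fin N) :
    e p * f q + f p * e q + (2⁻¹ : ℂ) • (h p * h q) = Th e f h p q := rfl




open Finset

/-- in `U(sl₂)^{⊗N}` — presented here as any `ℂ`-algebra containing, for
each `i`, elements `e_i, f_i, h_i` satisfying the `sl₂` relations `[h_i,e_i] = 2e_i`,
`[h_i,f_i] = -2f_i`, `[e_i,f_i] = h_i`, with generators in distinct tensor factors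
commuting — the Gaudin hamiltonians
`Ĥ_i = ∑_{j≠i} (e_i f_j + f_i e_j + (1/2) h_i h_j)/(a_i - a_j)`
(for distinct `a₁,…,a_N`) pairwise commute. -/
theorem stmt_12 (N : ℕ) (hN : 2 ≤ N) (a : Fin N → ℂ) (ha : Function.Injective a)
    (A : Type) [Ring A] [Algebra ℂ A] (e f h : Fin N → A)
    (rel_he : ∀ i, h i * e i - e i * h i = (2 : ℂ) • e i)
    (rel_hf : ∀ i, h i * f i - f i * h i = (-2 : ℂ) • f i)
    (rel_ef : ∀ i, e i * f i - f i * e i = h i)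
    (comm : ∀ i j, i ≠ j → ∀ u ∈ ({e i, f i, h i} : Set A),
      ∀ v ∈ ({e j, f j, h j} : Set A), u * v = v * u)
    (H : Fin N → A)
    (hH : ∀ i, H i = ∑ j ∈ Finset.univ.erase i,
      ((a i - a j)⁻¹) • (e i * f j + f i * e j + (2⁻¹ : ℂ) • (h i * h j))) :
    ∀ i j, H i * H j = H j * H i := by
  -- commuting helpers
  have mulc : ∀ u v w : A, u * v = v * u → u * w = w * u → u * (v * w) = v * w * u := by
    intro u v w h1 h2; rw [← mul_assoc, h1, mul_assoc, h2, ← mul_assoc]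
  have smulc : ∀ (r : ℂ) (u v : A), u * v = v * u → u * (r • v) = r • v * u := by
    intro r u v h1; rw [mul_smul_comm, h1, smul_mul_assoc]
  have addc : ∀ u v w : A, u * v = v * u → u * w = w * u → u * (v + w) = (v + w) * u := by
    intro u v w h1 h2; rw [mul_add, add_mul, h1, h2]
  -- symmetry of Th
  have hsymm : ∀ p q, p ≠ q → Th e f h p q = Th e f h q p := by
    intro p q hpq
    have h1 := comm p q hpq (e p) (by simp) (f q) (by simp)
    have h2 := comm p q hpq (f p) (by simp) (e q) (by simp)
    have h3 := comm p q hpq (h p) (by simp) (h q) (by simp)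
    simp only [Th]
    rw [h1, h2, h3, add_comm (f q * e p) (e q * f p)]
  -- each generator of x commutes with Th r s when x ∉ {r,s}
  have c1 : ∀ (x r s : Fin N), x ≠ r → x ≠ s → ∀ u ∈ ({e x, f x, h x} : Set A),
      u * Th e f h r s = Th e f h r s * u := by
    intro x r s hxr hxs u hu
    simp only [Th]
    exact addc _ _ _
      (addc _ _ _
        (mulc _ _ _ (comm x r hxr u hu _ (by simp)) (comm x s hxs u hu _ (by simp)))
        (mulc _ _ _ (comm x r hxr u hu _ (by simp)) (comm x s hxs u hu _ (by simp))))
      (smulc _ _ _ (mulc _ _ _ (comm x r hxr u hu _ (by simp)) (comm x s hxs u hu _ (by simp))))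
  -- Th p q commutes with Th r s when {p,q} ∩ {r,s} = ∅
  have commTh : ∀ p q r s, p ≠ r → p ≠ s → q ≠ r → q ≠ s →
      Th e f h p q * Th e f h r s = Th e f h r s * Th e f h p q := by
    intro p q r s hpr hps hqr hqs
    have hx := c1 p r s hpr hps
    have hy := c1 q r s hqr hqs
    have mulc' : ∀ u v : A, u * Th e f h r s = Th e f h r s * u →
        v * Th e f h r s = Th e f h r s * v →
        u * v * Th e f h r s = Th e f h r s * (u * v) := by
      intro u v h1 h2; rw [mul_assoc, h2, ← mul_assoc, h1, mul_assoc]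
    have smulc' : ∀ (c : ℂ) (u : A), u * Th e f h r s = Th e f h r s * u →
        (c • u) * Th e f h r s = Th e f h r s * (c • u) := by
      intro c u h1; rw [smul_mul_assoc, h1, mul_smul_comm]
    have addc' : ∀ u v : A, u * Th e f h r s = Th e f h r s * u →
        v * Th e f h r s = Th e f h r s * v →
        (u + v) * Th e f h r s = Th e f h r s * (u + v) := by
      intro u v h1 h2; rw [add_mul, mul_add, h1, h2]
    have hpq : Th e f h p q = e p * f q + f p * e q + (2⁻¹ : ℂ) • (h p * h q) := rfl
    rw [hpq]
    exact addc' _ _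
      (addc' _ _ (mulc' _ _ (hx _ (by simp)) (hy _ (by simp)))
        (mulc' _ _ (hx _ (by simp)) (hy _ (by simp))))
      (smulc' _ _ (mulc' _ _ (hx _ (by simp)) (hy _ (by simp))))
  -- the key three-index identity
  have keyB : ∀ p q r, p ≠ q → p ≠ r → q ≠ r →
      (Th e f h p q * Th e f h p r - Th e f h p r * Th e f h p q)
      + (Th e f h p q * Th e f h q r - Th e f h q r * Th e f h p q) = 0 := by
    intro p q r h1 h2 h3
    simp only [Th]
    exact key_comm (e p) (f p) (h p) (e q) (f q) (h q) (e r) (f r) (h r)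
      (rel_he p) (rel_hf p) (rel_ef p) (rel_he q) (rel_hf q) (rel_ef q)
      (comm p q h1) (comm p r h2) (comm q r h3)
  -- double-sum expansion
  have expand : ∀ (s t : Finset (Fin N)) (F G : Fin N → A) (cF cG : Fin N → ℂ),
      (∑ k ∈ s, cF k • F k) * (∑ l ∈ t, cG l • G l)
        - (∑ l ∈ t, cG l • G l) * (∑ k ∈ s, cF k • F k)
      = ∑ k ∈ s, ∑ l ∈ t, (cF k * cG l) • (F k * G l - G l * F k) := by
    intro s t F G cF cG
    rw [Finset.sum_mul_sum, Finset.sum_mul_sum, Finset.sum_comm (s := t),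
      ← Finset.sum_sub_distrib]
    refine Finset.sum_congr rfl fun k _ => ?_
    rw [← Finset.sum_sub_distrib]
    refine Finset.sum_congr rfl fun l _ => ?_
    rw [smul_mul_assoc, smul_mul_assoc, mul_smul_comm, mul_smul_comm, smul_smul, smul_smul,
      mul_comm (cG l) (cF k), ← smul_sub]
  intro i j
  rcases eq_or_ne i j with rfl | hij
  · rfl
  rw [← sub_eq_zero]
  simp only [hH, Th_def]
  rw [expand (univ.erase i) (univ.erase j) (fun k => Th e f h i k) (fun l => Th e f h j l)
    (fun k => (a i - a k)⁻¹) (fun l => (a j - a l)⁻¹)]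
  have hmem1 : j ∈ (univ : Finset (Fin N)).erase i :=
    Finset.mem_erase.mpr ⟨hij.symm, Finset.mem_univ j⟩
  have hmem2 : i ∈ (univ : Finset (Fin N)).erase j :=
    Finset.mem_erase.mpr ⟨hij, Finset.mem_univ i⟩
  have hT1 : (univ : Finset (Fin N)).erase i = insert j ((univ.erase i).erase j) :=
    (Finset.insert_erase hmem1).symm
  have hTeq : ((univ : Finset (Fin N)).erase j).erase i = (univ.erase i).erase j := by
    ext x; simp only [Finset.mem_erase, Finset.mem_univ, and_true]; tauto
  have hT2 : (univ : Finset (Fin N)).erase j = insert i ((univ.erase i).erase j) := by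
    rw [← hTeq]; exact (Finset.insert_erase hmem2).symm
  have hiT : i ∉ ((univ : Finset (Fin N)).erase i).erase j := fun hm =>
    (Finset.mem_erase.mp (Finset.mem_erase.mp hm).2).1 rfl
  have hjT : j ∉ ((univ : Finset (Fin N)).erase i).erase j := Finset.notMem_erase j _
  rw [hT1, hT2, Finset.sum_insert hjT]
  simp only [Finset.sum_insert hiT]
  have zero1 : ((a i - a j)⁻¹ * (a j - a i)⁻¹) •
      (Th e f h i j * Th e f h j i - Th e f h j i * Th e f h i j) = 0 := by
    rw [hsymm j i hij.symm, sub_self, smul_zero]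
  rw [zero1, zero_add]
  have inner_eq : ∀ k ∈ ((univ : Finset (Fin N)).erase i).erase j,
      (∑ l ∈ ((univ : Finset (Fin N)).erase i).erase j,
        ((a i - a k)⁻¹ * (a j - a l)⁻¹) •
          (Th e f h i k * Th e f h j l - Th e f h j l * Th e f h i k))
      = ((a i - a k)⁻¹ * (a j - a k)⁻¹) •
          (Th e f h i k * Th e f h j k - Th e f h j k * Th e f h i k) := by
    intro k hk
    have hkj : k ≠ j := (Finset.mem_erase.mp hk).1
    refine Finset.sum_eq_single_of_mem k hk fun l hl hlk => ?_
    have hlj : l ≠ j := (Finset.mem_erase.mp hl).1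
    have hli : l ≠ i := (Finset.mem_erase.mp (Finset.mem_erase.mp hl).2).1
    rw [commTh i k j l hij hli.symm hkj hlk.symm, sub_self, smul_zero]
  rw [Finset.sum_congr rfl fun k hk => congrArg (_ + ·) (inner_eq k hk),
    ← Finset.sum_add_distrib]
  refine Finset.sum_eq_zero fun k hk => ?_
  have hkj : k ≠ j := (Finset.mem_erase.mp hk).1
  have hki : k ≠ i := (Finset.mem_erase.mp (Finset.mem_erase.mp hk).2).1
  have hik : i ≠ k := hki.symm
  have hjk : j ≠ k := hkj.symm
  -- bracket identities
  have hKB1 := keyB i j k hij hik hjk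
  have hD : Th e f h i j * Th e f h i k - Th e f h i k * Th e f h i j
      = -(Th e f h i j * Th e f h j k - Th e f h j k * Th e f h i j) :=
    eq_neg_of_add_eq_zero_left hKB1
  have hC : Th e f h i k * Th e f h i j - Th e f h i j * Th e f h i k
      = Th e f h i j * Th e f h j k - Th e f h j k * Th e f h i j := by
    rw [← neg_sub (Th e f h i j * Th e f h i k) (Th e f h i k * Th e f h i j), hD, neg_neg]
  have id1 : Th e f h i k * Th e f h j i - Th e f h j i * Th e f h i k
      = Th e f h i j * Th e f h j k - Th e f h j k * Th e f h i j := by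
    rw [hsymm j i hij.symm]; exact hC
  have hKB2 := keyB i k j hik hij hjk.symm
  rw [hsymm k j hkj] at hKB2
  rw [hC] at hKB2
  have id2 : Th e f h i k * Th e f h j k - Th e f h j k * Th e f h i k
      = -(Th e f h i j * Th e f h j k - Th e f h j k * Th e f h i j) :=
    eq_neg_of_add_eq_zero_right hKB2
  rw [id1, id2, smul_neg]
  beta_reduce
  rw [← sub_eq_add_neg, ← sub_smul, ← add_smul]
  have hu : a i - a j ≠ 0 := sub_ne_zero.mpr fun hx => hij (ha hx)
  have hv : a j - a k ≠ 0 := sub_ne_zero.mpr fun hx => hjk (ha hx)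
  have hw : a i - a k ≠ 0 := sub_ne_zero.mpr fun hx => hik (ha hx)
  have hu' : a j - a i ≠ 0 := sub_ne_zero.mpr fun hx => hij (ha hx).symm
  have hs : (a i - a j)⁻¹ * (a j - a k)⁻¹
      + ((a i - a k)⁻¹ * (a j - a i)⁻¹ - (a i - a k)⁻¹ * (a j - a k)⁻¹) = 0 := by
    field_simp
    ring
  rw [hs, zero_smul]
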